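/- Fix λ ∈ ℚ and let K = ℚ(t). For integers k ≥ 0 and s ≥ 0, let F(k,s) ∈ K be the residue (coefficient of Y^{−1}) of the formal Laurent series N(Y)^k / (Y^{2s} D(Y)) over K, where N(Y) = (1 − λY²/2)(1 − Y²t²) + 4t and D(Y) = e^{Y/2}(1+Yt)² − e^{−Y/2}(1−Yt)². Then F(k,s) is either zero or a rational function of t of total degree at most k + s − 1. -/

import Mathlib

open PowerSeries

/-- `N(Y) = (1 - λY²/2)(1 - Y²t²) + 4t` as a formal power series in `Y` over `K = ℚ(t)`. -/
noncomputable def Nser (lam : ℚ) : PowerSeries (RatFunc ℚ) :=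
  (1 - PowerSeries.C (R := RatFunc ℚ) (algebraMap ℚ (RatFunc ℚ) lam / 2) *
      PowerSeries.X ^ 2) *
    (1 - PowerSeries.C (R := RatFunc ℚ) (RatFunc.X ^ 2) * PowerSeries.X ^ 2) +
  PowerSeries.C (R := RatFunc ℚ) (4 * RatFunc.X)

/-- `D(Y) = e^{Y/2}(1+Yt)² - e^{-Y/2}(1-Yt)²` as a formal power series in `Y` over
`K = ℚ(t)`. -/
noncomputable def DserK : PowerSeries (RatFunc ℚ) :=
  PowerSeries.rescale (algebraMap ℚ (RatFunc ℚ) (1 / 2))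
      (PowerSeries.exp (RatFunc ℚ)) *
      (1 + PowerSeries.C (R := RatFunc ℚ) RatFunc.X * PowerSeries.X) ^ 2 -
    PowerSeries.rescale (algebraMap ℚ (RatFunc ℚ) (-(1 / 2)))
      (PowerSeries.exp (RatFunc ℚ)) *
      (1 - PowerSeries.C (R := RatFunc ℚ) RatFunc.X * PowerSeries.X) ^ 2

/-- `F(k,s)`: the residue (coefficient of `Y⁻¹`) of the formal Laurent series
`N(Y)^k / (Y^{2s} D(Y))` over `K = ℚ(t)`. -/
noncomputable def Fres (lam : ℚ) (k : ℕ) (s : ℤ) : RatFunc ℚ :=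
  ((((Nser lam ^ k : PowerSeries (RatFunc ℚ)) : LaurentSeries (RatFunc ℚ))) /
    (((PowerSeries.X : PowerSeries (RatFunc ℚ)) : LaurentSeries (RatFunc ℚ)) ^ (2 * s) *
      ((DserK : PowerSeries (RatFunc ℚ)) : LaurentSeries (RatFunc ℚ)))).coeff (-1)

/-- Degree-bound predicate: `x = 0` or `2·intDegree x ≤ d`. -/
def Dg (x : RatFunc ℚ) (d : ℤ) : Prop := x = 0 ∨ 2 * x.intDegree ≤ d

lemma Dg_zero (d : ℤ) : Dg 0 d := Or.inl rfl

lemma Dg_mono {x : RatFunc ℚ} {d e : ℤ} (h : d ≤ e) (hx : Dg x d) : Dg x e := by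
  rcases hx with rfl | hx
  · exact Or.inl rfl
  · exact Or.inr (hx.trans h)

lemma Dg_add {x y : RatFunc ℚ} {d : ℤ} (hx : Dg x d) (hy : Dg y d) : Dg (x + y) d := by
  by_cases hx0 : x = 0
  · simpa [hx0] using hy
  by_cases hy0 : y = 0
  · simpa [hy0] using hx
  by_cases hxy : x + y = 0
  · exact Or.inl hxy
  rcases hx with rfl | hx
  · exact absurd rfl hx0
  rcases hy with rfl | hy
  · exact absurd rfl hy0
  right
  have h := RatFunc.intDegree_add_le hy0 hxy
  rcases max_choice x.intDegree y.intDegree with hm | hm <;> rw [hm] at h <;> omega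

lemma Dg_neg {x : RatFunc ℚ} {d : ℤ} (hx : Dg x d) : Dg (-x) d := by
  rcases hx with rfl | hx
  · exact Or.inl (by simp)
  · exact Or.inr (by rwa [RatFunc.intDegree_neg])

lemma Dg_sub {x y : RatFunc ℚ} {d : ℤ} (hx : Dg x d) (hy : Dg y d) : Dg (x - y) d := by
  rw [sub_eq_add_neg]; exact Dg_add hx (Dg_neg hy)

lemma Dg_mul {x y : RatFunc ℚ} {a b : ℤ} (hx : Dg x a) (hy : Dg y b) : Dg (x * y) (a + b) := by
  rcases hx with rfl | hx
  · exact Or.inl (by simp)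
  rcases hy with rfl | hy
  · exact Or.inl (by simp)
  by_cases hx0 : x = 0
  · exact Or.inl (by simp [hx0])
  by_cases hy0 : y = 0
  · exact Or.inl (by simp [hy0])
  right
  rw [RatFunc.intDegree_mul hx0 hy0]
  omega

lemma Dg_sum {ι : Type*} {s : Finset ι} {f : ι → RatFunc ℚ} {d : ℤ}
    (h : ∀ i ∈ s, Dg (f i) d) : Dg (∑ i ∈ s, f i) d :=
  Finset.sum_induction f (fun x => Dg x d) (fun _ _ => Dg_add) (Dg_zero d) h

lemma Dg_ratCast (q : ℚ) : Dg (algebraMap ℚ (RatFunc ℚ) q) 0 := by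
  have h : algebraMap ℚ (RatFunc ℚ) q = RatFunc.C q := by
    rw [eq_ratCast (algebraMap ℚ (RatFunc ℚ)) q,
      ← map_ratCast (RatFunc.C : ℚ →+* RatFunc ℚ) q, Rat.cast_id]
  rw [h]
  exact Or.inr (by rw [RatFunc.intDegree_C]; norm_num)

lemma Dg_t : Dg (RatFunc.X : RatFunc ℚ) 2 :=
  Or.inr (by rw [RatFunc.intDegree_X]; norm_num)

lemma Dg_two : Dg (2 : RatFunc ℚ) 0 := by
  have : (2 : RatFunc ℚ) = algebraMap ℚ (RatFunc ℚ) 2 := by norm_num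
  rw [this]; exact Dg_ratCast 2

lemma Dg_t2 : Dg (RatFunc.X ^ 2 : RatFunc ℚ) 4 := by
  rw [sq]
  exact Dg_mul Dg_t Dg_t

lemma one_add_four_t_eq : (1 + 4 * RatFunc.X : RatFunc ℚ)
    = algebraMap (Polynomial ℚ) (RatFunc ℚ) (1 + 4 * Polynomial.X) := by
  rw [map_add, map_mul, map_one, map_ofNat, RatFunc.algebraMap_X]

lemma poly_ne : (1 + 4 * Polynomial.X : Polynomial ℚ) ≠ 0 := by
  intro h
  simpa using congrArg (fun p => Polynomial.coeff p 0) h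

lemma one_add_four_t_ne : (1 + 4 * RatFunc.X : RatFunc ℚ) ≠ 0 := by
  rw [one_add_four_t_eq]
  simpa using (RatFunc.algebraMap_injective ℚ).ne poly_ne

lemma intDegree_one_add_four_t : (1 + 4 * RatFunc.X : RatFunc ℚ).intDegree = 1 := by
  rw [one_add_four_t_eq, RatFunc.intDegree_polynomial]
  norm_num [Polynomial.natDegree_add_eq_right_of_natDegree_lt]

lemma Dg_one_add_four_t : Dg (1 + 4 * RatFunc.X : RatFunc ℚ) 2 :=
  Or.inr (by rw [intDegree_one_add_four_t]; norm_num)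

lemma Dg_inv_one_add_four_t : Dg ((1 + 4 * RatFunc.X : RatFunc ℚ)⁻¹) (-2) := by
  right
  have h1 : (1 + 4 * RatFunc.X : RatFunc ℚ) * (1 + 4 * RatFunc.X)⁻¹ = 1 :=
    mul_inv_cancel₀ one_add_four_t_ne
  have h2 := RatFunc.intDegree_mul one_add_four_t_ne (inv_ne_zero one_add_four_t_ne)
  rw [h1, RatFunc.intDegree_one, intDegree_one_add_four_t] at h2
  omega

-- Section 2 proper
lemma Dg_coeff_mul {f g : PowerSeries (RatFunc ℚ)} {a b : ℤ}
    (hf : ∀ i : ℕ, Dg (PowerSeries.coeff i f) (a + i))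
    (hg : ∀ j : ℕ, Dg (PowerSeries.coeff j g) (b + j)) (n : ℕ) :
    Dg (PowerSeries.coeff n (f * g)) (a + b + n) := by
  rw [PowerSeries.coeff_mul]
  apply Dg_sum
  intro p hp
  rw [Finset.HasAntidiagonal.mem_antidiagonal] at hp
  refine Dg_mono ?_ (Dg_mul (hf p.1) (hg p.2))
  omega

lemma coeff_rescale_exp (q : ℚ) (i : ℕ) :
    PowerSeries.coeff (R := RatFunc ℚ) i
        (rescale (algebraMap ℚ (RatFunc ℚ) q) (exp (RatFunc ℚ)))
      = algebraMap ℚ (RatFunc ℚ) (q ^ i * (1 / (Nat.factorial i : ℚ))) := by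
  rw [coeff_rescale, coeff_exp, ← map_pow, ← map_mul]

lemma Dg_coeff_rescale_exp (q : ℚ) (i : ℕ) :
    Dg (PowerSeries.coeff (R := RatFunc ℚ) i
      (rescale (algebraMap ℚ (RatFunc ℚ) q) (exp (RatFunc ℚ)))) 0 := by
  rw [coeff_rescale_exp]; exact Dg_ratCast _

lemma sq_expand (a : RatFunc ℚ) :
    (1 + PowerSeries.C (R := RatFunc ℚ) a * X) ^ 2
      = 1 + PowerSeries.C (R := RatFunc ℚ) (2 * a) * X
          + PowerSeries.C (R := RatFunc ℚ) (a ^ 2) * X ^ 2 := by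
  simp only [map_mul, map_pow, map_ofNat]
  ring

lemma sq_expand' (a : RatFunc ℚ) :
    (1 - PowerSeries.C (R := RatFunc ℚ) a * X) ^ 2
      = 1 + PowerSeries.C (R := RatFunc ℚ) (-(2 * a)) * X
          + PowerSeries.C (R := RatFunc ℚ) (a ^ 2) * X ^ 2 := by
  simp only [map_neg, map_mul, map_pow, map_ofNat]
  ring

lemma DserK_eq : DserK =
    rescale (algebraMap ℚ (RatFunc ℚ) (1 / 2)) (exp (RatFunc ℚ)) *
      (1 + PowerSeries.C (R := RatFunc ℚ) (2 * RatFunc.X) * X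
        + PowerSeries.C (R := RatFunc ℚ) (RatFunc.X ^ 2) * X ^ 2)
    - rescale (algebraMap ℚ (RatFunc ℚ) (-(1 / 2))) (exp (RatFunc ℚ)) *
      (1 + PowerSeries.C (R := RatFunc ℚ) (-(2 * RatFunc.X)) * X
        + PowerSeries.C (R := RatFunc ℚ) (RatFunc.X ^ 2) * X ^ 2) := by
  rw [DserK, sq_expand, sq_expand']

lemma mul_quad_eq (f : PowerSeries (RatFunc ℚ)) (a b : RatFunc ℚ) :
    f * (1 + PowerSeries.C (R := RatFunc ℚ) a * X + PowerSeries.C (R := RatFunc ℚ) b * X ^ 2)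
      = f + PowerSeries.C (R := RatFunc ℚ) a * (X * f)
          + PowerSeries.C (R := RatFunc ℚ) b * (X * (X * f)) := by
  ring

lemma coeff_mul_quad_zero (f : PowerSeries (RatFunc ℚ)) (a b : RatFunc ℚ) :
    PowerSeries.coeff 0 (f * (1 + PowerSeries.C (R := RatFunc ℚ) a * X
        + PowerSeries.C (R := RatFunc ℚ) b * X ^ 2)) = PowerSeries.coeff 0 f := by
  rw [mul_quad_eq]
  simp

lemma coeff_mul_quad_one (f : PowerSeries (RatFunc ℚ)) (a b : RatFunc ℚ) :
    PowerSeries.coeff 1 (f * (1 + PowerSeries.C (R := RatFunc ℚ) a * X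
        + PowerSeries.C (R := RatFunc ℚ) b * X ^ 2))
      = PowerSeries.coeff 1 f + a * PowerSeries.coeff 0 f := by
  rw [mul_quad_eq]
  simp only [map_add, coeff_C_mul]
  rw [show (1 : ℕ) = 0 + 1 from rfl, coeff_succ_X_mul, coeff_succ_X_mul]
  simp

lemma coeff_mul_quad_two (f : PowerSeries (RatFunc ℚ)) (a b : RatFunc ℚ) :
    PowerSeries.coeff 2 (f * (1 + PowerSeries.C (R := RatFunc ℚ) a * X
        + PowerSeries.C (R := RatFunc ℚ) b * X ^ 2))
      = PowerSeries.coeff 2 f + a * PowerSeries.coeff 1 f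
          + b * PowerSeries.coeff 0 f := by
  rw [mul_quad_eq]
  simp only [map_add, coeff_C_mul]
  rw [show (2 : ℕ) = 1 + 1 from rfl, coeff_succ_X_mul, coeff_succ_X_mul,
    show (1 : ℕ) = 0 + 1 from rfl, coeff_succ_X_mul]

lemma Dg_coeff_quad {a b : RatFunc ℚ} (ha : Dg a 4) (hb : Dg b 4) (j : ℕ) :
    Dg (PowerSeries.coeff j (1 + PowerSeries.C (R := RatFunc ℚ) a * X
        + PowerSeries.C (R := RatFunc ℚ) b * X ^ 2)) 4 := by
  simp only [map_add, coeff_C_mul, coeff_one, coeff_X, coeff_X_pow]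
  apply Dg_add (Dg_add _ _) _
  · split_ifs
    · exact Or.inr (by simp)
    · exact Dg_zero _
  · split_ifs
    · simpa using ha
    · simpa using Dg_zero 4
  · split_ifs
    · simpa using hb
    · simpa using Dg_zero 4

lemma Dg_coeff_D (n : ℕ) : Dg (PowerSeries.coeff n DserK) 4 := by
  rw [DserK_eq, map_sub]
  apply Dg_sub
  · rw [PowerSeries.coeff_mul]
    apply Dg_sum
    intro p _
    refine Dg_mono ?_ (Dg_mul (Dg_coeff_rescale_exp _ _)
      (Dg_coeff_quad (Dg_mono (by norm_num) (Dg_mul Dg_two Dg_t)) Dg_t2 p.2))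
    norm_num
  · rw [PowerSeries.coeff_mul]
    apply Dg_sum
    intro p _
    refine Dg_mono ?_ (Dg_mul (Dg_coeff_rescale_exp _ _)
      (Dg_coeff_quad (Dg_neg (Dg_mono (by norm_num) (Dg_mul Dg_two Dg_t))) Dg_t2 p.2))
    norm_num

lemma coeff_zero_D : PowerSeries.coeff (R := RatFunc ℚ) 0 DserK = 0 := by
  rw [DserK_eq, map_sub, coeff_mul_quad_zero, coeff_mul_quad_zero,
    coeff_rescale_exp, coeff_rescale_exp]
  norm_num

lemma ratFunc_charZero : CharZero (RatFunc ℚ) :=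
  charZero_of_injective_algebraMap (RatFunc.algebraMap_injective ℚ)

lemma algebraMap_rat_eq (q : ℚ) : algebraMap ℚ (RatFunc ℚ) q = (q : RatFunc ℚ) := by
  rw [eq_ratCast (algebraMap ℚ (RatFunc ℚ)) q]

lemma coeff_one_D : PowerSeries.coeff (R := RatFunc ℚ) 1 DserK = 1 + 4 * RatFunc.X := by
  rw [DserK_eq, map_sub, coeff_mul_quad_one, coeff_mul_quad_one,
    coeff_rescale_exp, coeff_rescale_exp, coeff_rescale_exp, coeff_rescale_exp]
  simp only [algebraMap_rat_eq]
  haveI := ratFunc_charZero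
  push_cast [Nat.factorial, Rat.cast_div, Rat.cast_neg, Rat.cast_one, Rat.cast_ofNat]
  ring

lemma coeff_two_D : PowerSeries.coeff (R := RatFunc ℚ) 2 DserK = 0 := by
  rw [DserK_eq, map_sub, coeff_mul_quad_two, coeff_mul_quad_two]
  simp only [coeff_rescale_exp]
  simp only [algebraMap_rat_eq]
  haveI := ratFunc_charZero
  push_cast [Nat.factorial, Rat.cast_div, Rat.cast_neg, Rat.cast_one, Rat.cast_ofNat]
  ring

-- Section 3: gser and its inverse
noncomputable def gser : PowerSeries (RatFunc ℚ) :=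
  PowerSeries.mk fun n => PowerSeries.coeff (n + 1) DserK

lemma coeff_gser (n : ℕ) :
    PowerSeries.coeff n gser = PowerSeries.coeff (R := RatFunc ℚ) (n + 1) DserK :=
  coeff_mk _ _

lemma D_eq : DserK = X * gser := by
  ext n
  cases n with
  | zero => simpa using coeff_zero_D
  | succ n => rw [coeff_succ_X_mul, coeff_gser]

lemma constantCoeff_gser : constantCoeff (R := RatFunc ℚ) gser = 1 + 4 * RatFunc.X := by
  rw [← coeff_zero_eq_constantCoeff, coeff_gser]
  exact coeff_one_D

lemma constantCoeff_gser_ne : constantCoeff (R := RatFunc ℚ) gser ≠ 0 := by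
  rw [constantCoeff_gser]; exact one_add_four_t_ne

lemma Dg_coeff_gser' (n : ℕ) (hn : 1 ≤ n) :
    Dg (PowerSeries.coeff n gser) ((n : ℤ) + 2) := by
  rcases eq_or_lt_of_le hn with h | h
  · rw [← h, coeff_gser]
    have h2 : (1 : ℕ) + 1 = 2 := rfl
    rw [h2, coeff_two_D]
    exact Dg_zero _
  · have h3 := Dg_coeff_D (n + 1)
    rw [← coeff_gser n] at h3
    exact Dg_mono (by omega) h3

lemma Dg_coeff_gser_inv (n : ℕ) : Dg (PowerSeries.coeff n gser⁻¹) ((n : ℤ) - 2) := by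
  induction n using Nat.strong_induction_on with
  | _ n ih =>
    rw [PowerSeries.coeff_inv]
    split_ifs with h
    · subst h
      rw [constantCoeff_gser]
      exact Dg_mono (by norm_num) Dg_inv_one_add_four_t
    · have h1 : Dg (-(constantCoeff (R := RatFunc ℚ) gser)⁻¹) (-2) := by
        rw [constantCoeff_gser]; exact Dg_neg Dg_inv_one_add_four_t
      have h2 : Dg (∑ x ∈ Finset.HasAntidiagonal.antidiagonal n,
          if x.2 < n then PowerSeries.coeff x.1 gser * PowerSeries.coeff x.2 gser⁻¹
          else 0) n := by
        apply Dg_sum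
        intro p hp
        rw [Finset.HasAntidiagonal.mem_antidiagonal] at hp
        split_ifs with hlt
        · have hp1 : 1 ≤ p.1 := by omega
          refine Dg_mono ?_ (Dg_mul (Dg_coeff_gser' p.1 hp1) (ih p.2 hlt))
          omega
        · exact Dg_zero _
      exact Dg_mono (by omega) (Dg_mul h1 h2)

-- Section 4: Nser
lemma Nexpand (lam : ℚ) : Nser lam =
    PowerSeries.C (R := RatFunc ℚ) (1 + 4 * RatFunc.X)
      + PowerSeries.C (R := RatFunc ℚ)
          (-(algebraMap ℚ (RatFunc ℚ) lam / 2 + RatFunc.X ^ 2)) * X ^ 2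
      + PowerSeries.C (R := RatFunc ℚ)
          (algebraMap ℚ (RatFunc ℚ) lam / 2 * RatFunc.X ^ 2) * X ^ 4 := by
  rw [Nser]
  simp only [map_add, map_mul, map_neg, map_one, map_ofNat, map_div₀, map_pow]
  ring

lemma Dg_half_lam (lam : ℚ) : Dg (algebraMap ℚ (RatFunc ℚ) lam / 2) 0 := by
  have h : algebraMap ℚ (RatFunc ℚ) lam / 2 = algebraMap ℚ (RatFunc ℚ) (lam / 2) := by
    rw [map_div₀, map_ofNat]
  rw [h]; exact Dg_ratCast _

lemma Dg_ite' {c : Prop} [Decidable c] {x : RatFunc ℚ} {d : ℤ} (h : c → Dg x d) :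
    Dg (if c then x else 0) d := by
  split_ifs with hc
  · exact h hc
  · exact Dg_zero _

lemma Dg_mul_ite {c : Prop} [Decidable c] {a : RatFunc ℚ} {d : ℤ} (h : c → Dg a d) :
    Dg (a * (if c then 1 else 0)) d := by
  split_ifs with hc
  · simpa using h hc
  · simpa using Dg_zero d

lemma Dg_coeff_N' (a b c : RatFunc ℚ) (ha : Dg a 2) (hb : Dg b 4) (hc : Dg c 4) (n : ℕ) :
    Dg (PowerSeries.coeff n (PowerSeries.C (R := RatFunc ℚ) a
      + PowerSeries.C (R := RatFunc ℚ) b * X ^ 2 + PowerSeries.C (R := RatFunc ℚ) c * X ^ 4))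
      ((n : ℤ) + 2) := by
  simp only [map_add, coeff_C_mul, coeff_C, coeff_X_pow]
  apply Dg_add (Dg_add _ _) _
  · apply Dg_ite'
    intro h; subst h
    exact Dg_mono (by norm_num) ha
  · apply Dg_mul_ite
    intro h; subst h
    exact Dg_mono (by norm_num) hb
  · apply Dg_mul_ite
    intro h; subst h
    exact Dg_mono (by norm_num) hc

lemma Dg_coeff_N (lam : ℚ) (n : ℕ) : Dg (PowerSeries.coeff n (Nser lam)) ((n : ℤ) + 2) := by
  rw [Nexpand]
  exact Dg_coeff_N' _ _ _ Dg_one_add_four_t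
    (Dg_neg (Dg_add (Dg_mono (by norm_num) (Dg_half_lam lam)) Dg_t2))
    (Dg_mono (by norm_num) (Dg_mul (Dg_half_lam lam) Dg_t2)) n

lemma Dg_coeff_Npow (lam : ℚ) (k : ℕ) :
    ∀ n : ℕ, Dg (PowerSeries.coeff n (Nser lam ^ k)) ((n : ℤ) + 2 * k) := by
  induction k with
  | zero =>
    intro n
    rw [pow_zero, PowerSeries.coeff_one]
    split_ifs with h
    · exact Or.inr (by simp [RatFunc.intDegree_one])
    · exact Dg_zero _
  | succ k ih =>
    intro n
    rw [pow_succ]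
    have := Dg_coeff_mul (a := 2 * k) (b := 2)
      (fun i => Dg_mono (by omega) (ih i))
      (fun j => Dg_mono (by omega) (Dg_coeff_N lam j)) n
    exact Dg_mono (by push_cast; omega) this

lemma Dg_final (lam : ℚ) (k s : ℕ) :
    Dg (PowerSeries.coeff (2 * s) (Nser lam ^ k * gser⁻¹))
      (2 * (k : ℤ) + 2 * s - 2) := by
  have := Dg_coeff_mul (a := 2 * k) (b := -2)
    (fun i => Dg_mono (by omega) (Dg_coeff_Npow lam k i))
    (fun j => Dg_mono (by omega) (Dg_coeff_gser_inv j)) (2 * s)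
  exact Dg_mono (by push_cast; omega) this

-- Section 5
lemma DserK_ne : DserK ≠ 0 := fun h =>
  one_add_four_t_ne (by rw [← coeff_one_D, h, map_zero])

lemma gser_inv_mul : gser⁻¹ * gser = 1 :=
  PowerSeries.inv_mul_cancel _ constantCoeff_gser_ne

open HahnSeries in
lemma Fres_eq (lam : ℚ) (k s : ℕ) :
    Fres lam k s = PowerSeries.coeff (2 * s) (Nser lam ^ k * gser⁻¹) := by
  rw [Fres]
  have hXne : ((PowerSeries.X : PowerSeries (RatFunc ℚ)) : LaurentSeries (RatFunc ℚ)) ≠ 0 := by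
    rw [PowerSeries.coe_X]
    exact single_ne_zero one_ne_zero
  have hDne : ((DserK : PowerSeries (RatFunc ℚ)) : LaurentSeries (RatFunc ℚ)) ≠ 0 := by
    intro h
    exact DserK_ne (HahnSeries.ofPowerSeries_injective
      (h.trans (map_zero (HahnSeries.ofPowerSeries ℤ (RatFunc ℚ))).symm))
  have hden : (((PowerSeries.X : PowerSeries (RatFunc ℚ)) : LaurentSeries (RatFunc ℚ))
        ^ (2 * (s : ℤ)) *
      ((DserK : PowerSeries (RatFunc ℚ)) : LaurentSeries (RatFunc ℚ))) ≠ 0 :=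
    mul_ne_zero (zpow_ne_zero _ hXne) hDne
  have key : (((Nser lam ^ k : PowerSeries (RatFunc ℚ)) : LaurentSeries (RatFunc ℚ))) /
      (((PowerSeries.X : PowerSeries (RatFunc ℚ)) : LaurentSeries (RatFunc ℚ)) ^ (2 * (s : ℤ)) *
        ((DserK : PowerSeries (RatFunc ℚ)) : LaurentSeries (RatFunc ℚ)))
      = ((Nser lam ^ k * gser⁻¹ : PowerSeries (RatFunc ℚ)) : LaurentSeries (RatFunc ℚ)) *
          HahnSeries.single (-(2 * (s : ℤ) + 1)) 1 := by
    rw [div_eq_iff hden]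
    have hzpow : ((PowerSeries.X : PowerSeries (RatFunc ℚ)) : LaurentSeries (RatFunc ℚ))
          ^ (2 * (s : ℤ))
        = ((PowerSeries.X ^ (2 * s) : PowerSeries (RatFunc ℚ)) : LaurentSeries (RatFunc ℚ)) := by
      rw [show (2 * (s : ℤ)) = ((2 * s : ℕ) : ℤ) by push_cast; ring, zpow_natCast,
        PowerSeries.coe_pow]
    rw [hzpow, D_eq]
    symm
    calc ((Nser lam ^ k * gser⁻¹ : PowerSeries (RatFunc ℚ)) : LaurentSeries (RatFunc ℚ)) *
          HahnSeries.single (-(2 * (s : ℤ) + 1)) 1 *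
          (((PowerSeries.X ^ (2 * s) : PowerSeries (RatFunc ℚ)) : LaurentSeries (RatFunc ℚ)) *
            ((X * gser : PowerSeries (RatFunc ℚ)) : LaurentSeries (RatFunc ℚ)))
        = ((Nser lam ^ k * gser⁻¹ * (X ^ (2 * s) * (X * gser)) :
              PowerSeries (RatFunc ℚ)) : LaurentSeries (RatFunc ℚ)) *
            HahnSeries.single (-(2 * (s : ℤ) + 1)) 1 := by
          simp only [PowerSeries.coe_mul]
          ring
      _ = ((Nser lam ^ k * X ^ (2 * s + 1) : PowerSeries (RatFunc ℚ)) :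
              LaurentSeries (RatFunc ℚ)) * HahnSeries.single (-(2 * (s : ℤ) + 1)) 1 := by
          rw [show Nser lam ^ k * gser⁻¹ * (X ^ (2 * s) * (X * gser))
              = Nser lam ^ k * X ^ (2 * s + 1) * (gser⁻¹ * gser) by ring, gser_inv_mul, mul_one]
      _ = ((Nser lam ^ k : PowerSeries (RatFunc ℚ)) : LaurentSeries (RatFunc ℚ)) := by
          rw [PowerSeries.coe_mul,
            show ((X ^ (2 * s + 1) : PowerSeries (RatFunc ℚ)) : LaurentSeries (RatFunc ℚ))
              = HahnSeries.single (((2 * s + 1 : ℕ) • (1 : ℤ))) 1 by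
                rw [PowerSeries.coe_pow, PowerSeries.coe_X, single_pow, one_pow],
            mul_assoc, single_mul_single, one_mul,
            show ((2 * s + 1 : ℕ) • (1 : ℤ) + (-(2 * (s : ℤ) + 1))) = 0 by
              rw [nsmul_eq_mul, mul_one]; push_cast; ring,
            single_zero_one, mul_one]
  rw [key, show (-1 : ℤ) = ((2 * s : ℕ) : ℤ) + (-(2 * (s : ℤ) + 1)) by push_cast; ring,
    HahnSeries.coeff_mul_single_add, mul_one, LaurentSeries.coeff_coe_powerSeries]


/-- For all `k, s ≥ 0`, the residue `F(k,s)` of `N(Y)^k/(Y^{2s}D(Y))` is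
either zero or a rational function of `t` of total degree (numerator degree minus
denominator degree) at most `k + s - 1`. -/
theorem Fres_degree_bound (lam : ℚ) (k s : ℕ) :
    Fres lam k s = 0 ∨ (Fres lam k s).intDegree ≤ (k : ℤ) + (s : ℤ) - 1 := by
  rw [Fres_eq]
  rcases Dg_final lam k s with h | h
  · exact Or.inl h
  · right; omega
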